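/- For a general linear quantum system, if the stacked vector [x₁; x₂] (with x₁, x₂ ∈ ℂ^n) belongs to the controllable subspace Im(C_G), then the vector [x₁ + conj(x₂); x₂ + conj(x₁)] also belongs to Im(C_G). -/

import Mathlib

open Matrix

noncomputable section

/-- `J_k = [I 0; 0 -I]` acting on `ℂ^{2k} = ℂ^k ⊕ ℂ^k`. -/
def Jmat (k : ℕ) : Matrix (Fin k ⊕ Fin k) (Fin k ⊕ Fin k) ℂ :=
  Matrix.fromBlocks 1 0 0 (-1)

/-- Entrywise complex conjugation of a matrix. -/
def mconj {α β : Type} (M : Matrix α β ℂ) : Matrix α β ℂ :=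
  M.map (starRingEnd ℂ)

/-- The doubled-up matrix `Δ(U,V) = [U V; conj V  conj U]`. -/
def doubledUp {k r : ℕ} (U V : Matrix (Fin k) (Fin r) ℂ) :
    Matrix (Fin k ⊕ Fin k) (Fin r ⊕ Fin r) ℂ :=
  Matrix.fromBlocks U V (mconj V) (mconj U)

/-- The ♭-adjoint `X♭ = J_r Xᴴ J_k` of `X ∈ ℂ^{2k×2r}`. -/
def flat {k r : ℕ} (X : Matrix (Fin k ⊕ Fin k) (Fin r ⊕ Fin r) ℂ) :
    Matrix (Fin r ⊕ Fin r) (Fin k ⊕ Fin k) ℂ :=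
  Jmat r * Xᴴ * Jmat k

/-- Orthogonal complement of a subspace of `ℂ^ι` w.r.t. the standard Hermitian
inner product `⟪y, x⟫ = (star y) ⬝ᵥ x`. -/
def orthComp {ι : Type} [Fintype ι] (S : Submodule ℂ (ι → ℂ)) : Submodule ℂ (ι → ℂ) where
  carrier := {x | ∀ y ∈ S, star y ⬝ᵥ x = 0}
  add_mem' := by
    intro a b ha hb y hy
    simp only [Set.mem_setOf_eq] at *
    rw [dotProduct_add, ha y hy, hb y hy, add_zero]
  zero_mem' := by
    intro y hy
    simp
  smul_mem' := by
    intro c x hx y hy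
    simp only [Set.mem_setOf_eq] at *
    rw [dotProduct_smul, hx y hy, smul_zero]

/-- The controllable subspace `Im(C_G) = ∑_{k<2n} Im(𝒜ᵏℬ)`. -/
def ctrbSub (n m : ℕ) (𝒜 : Matrix (Fin n ⊕ Fin n) (Fin n ⊕ Fin n) ℂ)
    (ℬ : Matrix (Fin n ⊕ Fin n) (Fin m ⊕ Fin m) ℂ) : Submodule ℂ (Fin n ⊕ Fin n → ℂ) :=
  ⨆ k ∈ Finset.range (2 * n), LinearMap.range ((𝒜 ^ k * ℬ).mulVecLin)

/-- The unobservable subspace `Ker(O_G) = ⋂_{k<2n} Ker(𝒞𝒜ᵏ)`. -/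
def unobsSub (n m : ℕ) (𝒜 : Matrix (Fin n ⊕ Fin n) (Fin n ⊕ Fin n) ℂ)
    (𝒞 : Matrix (Fin m ⊕ Fin m) (Fin n ⊕ Fin n) ℂ) : Submodule ℂ (Fin n ⊕ Fin n → ℂ) :=
  ⨅ k ∈ Finset.range (2 * n), LinearMap.ker ((𝒞 * 𝒜 ^ k).mulVecLin)

def Smat (k : ℕ) : Matrix (Fin k ⊕ Fin k) (Fin k ⊕ Fin k) ℂ :=
  Matrix.fromBlocks 0 1 1 0

lemma Smat_mul_Smat (k : ℕ) : Smat k * Smat k = 1 := by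
  simp [Smat, Matrix.fromBlocks_multiply]

lemma Smat_conjTranspose (k : ℕ) : (Smat k)ᴴ = Smat k := by
  simp [Smat, Matrix.fromBlocks_conjTranspose]

lemma mconj_mul {α β γ : Type} [Fintype β] (A : Matrix α β ℂ) (B : Matrix β γ ℂ) :
    mconj (A * B) = mconj A * mconj B := Matrix.map_mul

lemma mconj_mconj {α β : Type} (A : Matrix α β ℂ) : mconj (mconj A) = A := by
  ext i j; simp [mconj]

lemma mconj_smul {α β : Type} (c : ℂ) (A : Matrix α β ℂ) :
    mconj (c • A) = (starRingEnd ℂ c) • mconj A := by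
  ext i j; simp [mconj]

lemma mconj_sub {α β : Type} (A B : Matrix α β ℂ) :
    mconj (A - B) = mconj A - mconj B := by
  ext i j; simp [mconj]

lemma mconj_neg {α β : Type} (A : Matrix α β ℂ) : mconj (-A) = -mconj A := by
  ext i j; simp [mconj]

lemma mconj_conjTranspose {α β : Type} (A : Matrix α β ℂ) :
    mconj (Aᴴ) = (mconj A)ᴴ := by
  ext i j; simp [mconj]

lemma mconj_Jmat (k : ℕ) : mconj (Jmat k) = Jmat k := by
  ext i j
  rcases i with i | i <;> rcases j with j | j <;>
    simp [mconj, Jmat, Matrix.one_apply] <;> split <;> simp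

lemma Jmat_Smat (k : ℕ) : Jmat k * Smat k = -(Smat k * Jmat k) := by
  simp [Jmat, Smat, Matrix.fromBlocks_multiply, Matrix.fromBlocks_neg]

lemma mconj_doubledUp {k r : ℕ} (U V : Matrix (Fin k) (Fin r) ℂ) :
    mconj (doubledUp U V) = Smat k * doubledUp U V * Smat r := by
  unfold mconj doubledUp Smat
  rw [Matrix.fromBlocks_map]
  simp only [Matrix.fromBlocks_multiply, Matrix.fromBlocks_map]
  ext i j
  rcases i with i | i <;> rcases j with j | j <;> simp [Matrix.fromBlocks, mconj]

lemma star_mulVec_mconj {α β : Type} [Fintype β] (M : Matrix α β ℂ) (w : β → ℂ) :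
    star ((mconj M).mulVec w) = M.mulVec (star w) := by
  funext i
  simp only [Pi.star_apply, Matrix.mulVec, dotProduct, mconj, Matrix.map_apply]
  rw [star_sum]
  simp [mul_comm]

lemma Smat_mulVec (k : ℕ) (v : Fin k ⊕ Fin k → ℂ) :
    (Smat k).mulVec v = Sum.elim (fun i => v (Sum.inr i)) (fun i => v (Sum.inl i)) := by
  have : v = Sum.elim (fun i => v (Sum.inl i)) (fun i => v (Sum.inr i)) := by
    funext j; rcases j with j | j <;> rfl
  rw [this, Smat, Matrix.fromBlocks_mulVec]
  simp

lemma mconj_pow_mul {a b : ℕ} (A : Matrix (Fin a ⊕ Fin a) (Fin a ⊕ Fin a) ℂ)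
    (B : Matrix (Fin a ⊕ Fin a) (Fin b ⊕ Fin b) ℂ)
    (hA : mconj A = Smat a * A * Smat a) (hB : mconj B = Smat a * B * Smat b) (k : ℕ) :
    mconj (A ^ k * B) = Smat a * (A ^ k * B) * Smat b := by
  induction k with
  | zero => simpa using hB
  | succ k ih =>
    have h1 : A ^ (k + 1) * B = A * (A ^ k * B) := by rw [pow_succ']; rw [Matrix.mul_assoc]
    rw [h1, mconj_mul, ih, hA]
    have hS := Smat_mul_Smat a
    calc Smat a * A * Smat a * (Smat a * (A ^ k * B) * Smat b)
        = Smat a * (A * ((Smat a * Smat a) * (A ^ k * B))) * Smat b := by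
          simp only [Matrix.mul_assoc]
      _ = Smat a * (A * (A ^ k * B)) * Smat b := by rw [hS]; rw [Matrix.one_mul]
noncomputable section
lemma mconj_flat {k r : ℕ} (X : Matrix (Fin k ⊕ Fin k) (Fin r ⊕ Fin r) ℂ)
    (hX : mconj X = Smat k * X * Smat r) :
    mconj (flat X) = Smat r * flat X * Smat k := by
  have hXH : (mconj X)ᴴ = Smat r * Xᴴ * Smat k := by
    rw [hX, Matrix.conjTranspose_mul, Matrix.conjTranspose_mul,
      Smat_conjTranspose, Smat_conjTranspose, Matrix.mul_assoc]
  calc mconj (flat X) = mconj (Jmat r) * mconj (Xᴴ) * mconj (Jmat k) := by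
        rw [flat, mconj_mul, mconj_mul]
    _ = Jmat r * (Smat r * Xᴴ * Smat k) * Jmat k := by
        rw [mconj_Jmat, mconj_Jmat, mconj_conjTranspose, hXH]
    _ = (Jmat r * Smat r) * Xᴴ * (Smat k * Jmat k) := by
        simp only [Matrix.mul_assoc]
    _ = (-(Smat r * Jmat r)) * Xᴴ * (-(Jmat k * Smat k)) := by
        rw [Jmat_Smat, Jmat_Smat]
        simp
    _ = Smat r * (Jmat r * Xᴴ * Jmat k) * Smat k := by
        simp only [Matrix.neg_mul, Matrix.mul_neg, neg_neg, Matrix.mul_assoc]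
    _ = Smat r * flat X * Smat k := by rw [flat]
/-- **Lemma 4.** For a general linear quantum system, if `[x₁; x₂] ∈ Im(C_G)` then
`[x₁ + conj x₂; x₂ + conj x₁] ∈ Im(C_G)`. -/
theorem ctrb_closed_under_conj_swap
    (n m : ℕ) (hn : 0 < n) (hm : 0 < m)
    (Ωm Ωp : Matrix (Fin n) (Fin n) ℂ) (Cm Cp : Matrix (Fin m) (Fin n) ℂ)
    (Ω : Matrix (Fin n ⊕ Fin n) (Fin n ⊕ Fin n) ℂ) (hΩ : Ω = doubledUp Ωm Ωp)
    (hΩH : Ω.IsHermitian)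
    (𝒞 : Matrix (Fin m ⊕ Fin m) (Fin n ⊕ Fin n) ℂ) (h𝒞 : 𝒞 = doubledUp Cm Cp)
    (𝒜 : Matrix (Fin n ⊕ Fin n) (Fin n ⊕ Fin n) ℂ)
    (h𝒜 : 𝒜 = (-Complex.I) • (Jmat n * Ω) - (1 / 2 : ℂ) • (flat 𝒞 * 𝒞))
    (ℬ : Matrix (Fin n ⊕ Fin n) (Fin m ⊕ Fin m) ℂ) (hℬ : ℬ = -flat 𝒞)
    (x₁ x₂ : Fin n → ℂ) (hx : Sum.elim x₁ x₂ ∈ ctrbSub n m 𝒜 ℬ) :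
    Sum.elim (x₁ + star x₂) (x₂ + star x₁) ∈ ctrbSub n m 𝒜 ℬ := by
  -- conjugation relations
  have hΩS : mconj Ω = Smat n * Ω * Smat n := by rw [hΩ]; exact mconj_doubledUp _ _
  have h𝒞S : mconj 𝒞 = Smat m * 𝒞 * Smat n := by rw [h𝒞]; exact mconj_doubledUp _ _
  have hflat : mconj (flat 𝒞) = Smat n * flat 𝒞 * Smat m := mconj_flat 𝒞 h𝒞S
  have hℬS : mconj ℬ = Smat n * ℬ * Smat m := by
    rw [hℬ, mconj_neg, hflat]
    simp [Matrix.mul_neg, Matrix.neg_mul]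
  have h𝒜S : mconj 𝒜 = Smat n * 𝒜 * Smat n := by
    have t1 : mconj ((-Complex.I) • (Jmat n * Ω))
        = Smat n * ((-Complex.I) • (Jmat n * Ω)) * Smat n := by
      rw [mconj_smul, mconj_mul, mconj_Jmat, hΩS]
      have : Jmat n * (Smat n * Ω * Smat n) = -(Smat n * (Jmat n * Ω) * Smat n) := by
        calc Jmat n * (Smat n * Ω * Smat n) = (Jmat n * Smat n) * Ω * Smat n := by
              simp only [Matrix.mul_assoc]
          _ = (-(Smat n * Jmat n)) * Ω * Smat n := by rw [Jmat_Smat]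
          _ = -(Smat n * (Jmat n * Ω) * Smat n) := by
              simp only [Matrix.neg_mul, Matrix.mul_assoc]
      rw [this]
      simp [Matrix.mul_smul, Matrix.smul_mul]
    have t2 : mconj ((1 / 2 : ℂ) • (flat 𝒞 * 𝒞))
        = Smat n * ((1 / 2 : ℂ) • (flat 𝒞 * 𝒞)) * Smat n := by
      rw [mconj_smul, mconj_mul, hflat, h𝒞S]
      have : Smat n * flat 𝒞 * Smat m * (Smat m * 𝒞 * Smat n)
          = Smat n * (flat 𝒞 * 𝒞) * Smat n := by
        calc Smat n * flat 𝒞 * Smat m * (Smat m * 𝒞 * Smat n)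
            = Smat n * (flat 𝒞 * ((Smat m * Smat m) * (𝒞 * Smat n))) := by
              simp only [Matrix.mul_assoc]
          _ = Smat n * (flat 𝒞 * 𝒞) * Smat n := by
              rw [Smat_mul_Smat]; simp only [Matrix.one_mul, Matrix.mul_assoc]
      rw [this]
      simp only [Matrix.mul_smul, Matrix.smul_mul]
      congr 1
      simp [Complex.ext_iff]
    rw [h𝒜, mconj_sub, t1, t2, ← h𝒜]
    rw [h𝒜]
    simp only [Matrix.mul_sub, Matrix.sub_mul]
  have hpow : ∀ k : ℕ, mconj (𝒜 ^ k * ℬ) = Smat n * (𝒜 ^ k * ℬ) * Smat m :=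
    mconj_pow_mul 𝒜 ℬ h𝒜S hℬS
  -- the antilinear swap-conjugation preserves the controllable subspace
  set σ : (Fin n ⊕ Fin n → ℂ) → (Fin n ⊕ Fin n → ℂ) :=
    fun x => star ((Smat n).mulVec x) with hσdef
  let T : Submodule ℂ (Fin n ⊕ Fin n → ℂ) :=
    { carrier := {x | σ x ∈ ctrbSub n m 𝒜 ℬ}
      add_mem' := by
        intro a b ha hb
        simp only [Set.mem_setOf_eq, hσdef, Matrix.mulVec_add, star_add] at *
        exact add_mem ha hb
      zero_mem' := by
        simp only [Set.mem_setOf_eq, hσdef, Matrix.mulVec_zero, star_zero]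
        exact zero_mem _
      smul_mem' := by
        intro c x hx
        simp only [Set.mem_setOf_eq, hσdef, Matrix.mulVec_smul, star_smul] at *
        exact Submodule.smul_mem _ _ hx }
  have hT : ctrbSub n m 𝒜 ℬ ≤ T := by
    rw [ctrbSub]
    apply iSup₂_le
    intro k hk x hxmem
    obtain ⟨u, rfl⟩ := hxmem
    show σ ((𝒜 ^ k * ℬ).mulVecLin u) ∈ ctrbSub n m 𝒜 ℬ
    have key : σ ((𝒜 ^ k * ℬ).mulVecLin u)
        = (𝒜 ^ k * ℬ).mulVec (star ((Smat m).mulVec u)) := by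
      have h1 : (Smat n).mulVec ((𝒜 ^ k * ℬ).mulVec u)
          = (mconj (𝒜 ^ k * ℬ)).mulVec ((Smat m).mulVec u) := by
        rw [Matrix.mulVec_mulVec, Matrix.mulVec_mulVec, hpow k,
          Matrix.mul_assoc, Matrix.mul_assoc, Smat_mul_Smat, Matrix.mul_one]
      simp only [hσdef, Matrix.mulVecLin_apply, h1, star_mulVec_mconj]
    rw [key]
    have hle : LinearMap.range ((𝒜 ^ k * ℬ).mulVecLin) ≤ ctrbSub n m 𝒜 ℬ :=
      le_iSup₂ (f := fun k (_ : k ∈ Finset.range (2 * n)) =>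
        LinearMap.range ((𝒜 ^ k * ℬ).mulVecLin)) k hk
    exact hle ⟨star ((Smat m).mulVec u), rfl⟩
  have hσx : σ (Sum.elim x₁ x₂) ∈ ctrbSub n m 𝒜 ℬ := hT hx
  have hdecomp : Sum.elim (x₁ + star x₂) (x₂ + star x₁)
      = Sum.elim x₁ x₂ + σ (Sum.elim x₁ x₂) := by
    funext j
    rcases j with j | j <;>
      simp [hσdef, Smat_mulVec]
  rw [hdecomp]
  exact add_mem hx hσx

end
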